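/- Let F : 𝕋 → Matrix p k ℂ and G : 𝕋 → Matrix q k ℂ be continuous, let γ > 0, and let G_o : 𝕋 → Matrix k k ℂ be continuous with G_o(z) invertible and G_o(z)ᴴG_o(z) = γ²·I − G(z)ᴴG(z) for all z ∈ 𝕋. If the stacked function satisfies ‖[F; G]‖∞ < γ, then ‖G‖∞ < γ and ‖F·G_o⁻¹‖∞ < 1 (where F·G_o⁻¹ denotes the continuous function z ↦ F(z)·G_o(z)⁻¹). -/

import Mathlib

open Matrix

/-- The spectral norm (ℓ²→ℓ² operator norm, largest singular value) of a complex matrix. -/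
noncomputable def specNorm {m n : Type*} [Fintype m] [Fintype n] [DecidableEq n]
    (M : Matrix m n ℂ) : ℝ :=
  ‖LinearMap.toContinuousLinearMap (Matrix.toEuclideanLin M)‖

/-- The `H∞` norm of a matrix-valued function on the unit circle:
`‖F‖∞ = sup_{z ∈ 𝕋} ‖F(z)‖`. -/
noncomputable def hinfNorm {m n : Type*} [Fintype m] [Fintype n] [DecidableEq n]
    (F : Circle → Matrix m n ℂ) : ℝ :=
  ⨆ z : Circle, specNorm (F z)

local notation "⟪" x ", " y "⟫" => @inner ℂ _ _ x y

lemma specNorm_nonneg' {m n : Type*} [Fintype m] [Fintype n] [DecidableEq n]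
    (M : Matrix m n ℂ) : 0 ≤ specNorm M := norm_nonneg _

lemma le_specNorm' {m n : Type*} [Fintype m] [Fintype n] [DecidableEq n]
    (M : Matrix m n ℂ) (v : EuclideanSpace ℂ n) :
    ‖toEuclideanLin M v‖ ≤ specNorm M * ‖v‖ := by
  simpa [specNorm] using (LinearMap.toContinuousLinearMap (Matrix.toEuclideanLin M)).le_opNorm v

lemma specNorm_le' {m n : Type*} [Fintype m] [Fintype n] [DecidableEq n]
    {M : Matrix m n ℂ} {c : ℝ} (hc : 0 ≤ c)
    (h : ∀ v : EuclideanSpace ℂ n, ‖toEuclideanLin M v‖ ≤ c * ‖v‖) : specNorm M ≤ c :=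
  ContinuousLinearMap.opNorm_le_bound _ hc (by simpa using h)

lemma specNorm_continuous' {m n : Type*} [Fintype m] [Fintype n] [DecidableEq n] :
    Continuous (specNorm : Matrix m n ℂ → ℝ) := by
  have : Continuous (fun M : Matrix m n ℂ =>
      LinearMap.toContinuousLinearMap (Matrix.toEuclideanLin M)) :=
    LinearMap.continuous_of_finiteDimensional
      ((LinearMap.toContinuousLinearMap.toLinearMap).comp
        (Matrix.toEuclideanLin.toLinearMap) : Matrix m n ℂ →ₗ[ℂ] (EuclideanSpace ℂ n →L[ℂ] EuclideanSpace ℂ m))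
  exact continuous_norm.comp this

lemma euclid_norm_sq' {ι : Type*} [Fintype ι] (x : EuclideanSpace ℂ ι) :
    ‖x‖ ^ 2 = ∑ i, ‖x i‖ ^ 2 := by
  rw [EuclideanSpace.norm_eq, Real.sq_sqrt (by positivity)]

lemma norm_fromRows_sq' {m₁ m₂ n : Type*} [Fintype m₁] [Fintype m₂] [Fintype n] [DecidableEq n]
    (A : Matrix m₁ n ℂ) (B : Matrix m₂ n ℂ) (v : EuclideanSpace ℂ n) :
    ‖toEuclideanLin (fromRows A B) v‖ ^ 2
      = ‖toEuclideanLin A v‖ ^ 2 + ‖toEuclideanLin B v‖ ^ 2 := by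
  rw [euclid_norm_sq', euclid_norm_sq', euclid_norm_sq', Fintype.sum_sum_type]
  congr 1

lemma inner_toEL' {m n : Type*} [Fintype m] [Fintype n] [DecidableEq m] [DecidableEq n]
    (M : Matrix m n ℂ) (v w : EuclideanSpace ℂ n) :
    ⟪toEuclideanLin M v, toEuclideanLin M w⟫ = ⟪v, toEuclideanLin (Mᴴ * M) w⟫ := by
  have h : toEuclideanLin (Mᴴ * M) w = toEuclideanLin Mᴴ (toEuclideanLin M w) := by
    simp [toEuclideanLin_apply, mulVec_mulVec]
  rw [h, Matrix.toEuclideanLin_conjTranspose_eq_adjoint, LinearMap.adjoint_inner_right]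

lemma norm_C_sq' {q k : ℕ} (γ : ℝ) (B : Matrix (Fin q) (Fin k) ℂ) (C : Matrix (Fin k) (Fin k) ℂ)
    (hfact : Cᴴ * C = ((γ : ℂ) ^ 2) • (1 : Matrix (Fin k) (Fin k) ℂ) - Bᴴ * B)
    (v : EuclideanSpace ℂ (Fin k)) :
    ‖toEuclideanLin C v‖ ^ 2 = γ ^ 2 * ‖v‖ ^ 2 - ‖toEuclideanLin B v‖ ^ 2 := by
  have h1 : ⟪toEuclideanLin C v, toEuclideanLin C v⟫
      = (γ : ℂ) ^ 2 * ⟪v, v⟫ - ⟪toEuclideanLin B v, toEuclideanLin B v⟫ := by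
    rw [inner_toEL', inner_toEL', hfact]
    have hone : toEuclideanLin ((((γ : ℂ) ^ 2) • (1 : Matrix (Fin k) (Fin k) ℂ)
        - Bᴴ * B)) v = ((γ : ℂ) ^ 2) • v - toEuclideanLin (Bᴴ * B) v := by
      simp [toEuclideanLin_apply, sub_mulVec, smul_mulVec]
    rw [hone, inner_sub_right, inner_smul_right]
  rw [inner_self_eq_norm_sq_to_K, inner_self_eq_norm_sq_to_K, inner_self_eq_norm_sq_to_K] at h1
  have h3 : ((‖toEuclideanLin C v‖ ^ 2 : ℝ) : ℂ)
      = ((γ ^ 2 * ‖v‖ ^ 2 - ‖toEuclideanLin B v‖ ^ 2 : ℝ) : ℂ) := by push_cast; exact h1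
  exact_mod_cast h3

lemma pointwise_bounds {p q k : ℕ} (A : Matrix (Fin p) (Fin k) ℂ) (B : Matrix (Fin q) (Fin k) ℂ)
    (C : Matrix (Fin k) (Fin k) ℂ) {γ : ℝ} (hγ : 0 < γ) (hC : IsUnit C)
    (hfact : Cᴴ * C = ((γ : ℂ) ^ 2) • (1 : Matrix (Fin k) (Fin k) ℂ) - Bᴴ * B)
    (hs : specNorm (fromRows A B) ≤ γ) :
    specNorm B ≤ specNorm (fromRows A B)
      ∧ specNorm (A * C⁻¹) ≤ specNorm (fromRows A B) / γ := by
  set s := specNorm (fromRows A B) with hsdef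
  have hs0 : 0 ≤ s := specNorm_nonneg' _
  constructor
  · apply specNorm_le' hs0
    intro v
    have h1 := norm_fromRows_sq' A B v
    have h2 := le_specNorm' (fromRows A B) v
    have h3 : ‖toEuclideanLin B v‖ ≤ ‖toEuclideanLin (fromRows A B) v‖ := by
      nlinarith [norm_nonneg (toEuclideanLin B v), norm_nonneg (toEuclideanLin (fromRows A B) v),
        norm_nonneg (toEuclideanLin A v)]
    exact h3.trans h2
  · apply specNorm_le' (div_nonneg hs0 hγ.le)
    intro v
    set u := toEuclideanLin C⁻¹ v with hu
    have hTA : toEuclideanLin (A * C⁻¹) v = toEuclideanLin A u := by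
      simp [hu, toEuclideanLin_apply, mulVec_mulVec]
    have hCu : toEuclideanLin C u = v := by
      have : toEuclideanLin C (toEuclideanLin C⁻¹ v) = toEuclideanLin (C * C⁻¹) v := by
        simp [toEuclideanLin_apply, mulVec_mulVec]
      rw [hu, this, Matrix.mul_nonsing_inv C ((Matrix.isUnit_iff_isUnit_det C).mp hC)]
      simp [toEuclideanLin_apply]
    have key1 : ‖toEuclideanLin A u‖ ^ 2 + ‖toEuclideanLin B u‖ ^ 2 ≤ s ^ 2 * ‖u‖ ^ 2 := by
      have h1 := norm_fromRows_sq' A B u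
      have h2 := le_specNorm' (fromRows A B) u
      nlinarith [norm_nonneg (toEuclideanLin (fromRows A B) u), norm_nonneg u]
    have key2 : ‖v‖ ^ 2 = γ ^ 2 * ‖u‖ ^ 2 - ‖toEuclideanLin B u‖ ^ 2 := by
      rw [← hCu]; exact norm_C_sq' γ B C hfact u
    rw [hTA]
    have hrhs : 0 ≤ s / γ * ‖v‖ := mul_nonneg (div_nonneg hs0 hγ.le) (norm_nonneg _)
    rw [← Real.sqrt_sq (norm_nonneg (toEuclideanLin A u)), ← Real.sqrt_sq hrhs]
    apply Real.sqrt_le_sqrt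
    rw [mul_pow, div_pow, div_mul_eq_mul_div, le_div_iff₀ (by positivity : (0:ℝ) < γ ^ 2)]
    have hss : (0:ℝ) ≤ (γ ^ 2 - s ^ 2) * ‖toEuclideanLin B u‖ ^ 2 :=
      mul_nonneg (by nlinarith) (sq_nonneg _)
    nlinarith [key1, key2, hss]

/-- If `‖[F; G]‖∞ < γ` and, pointwise on the circle, `G_o(z)` is invertible with
`G_o(z)ᴴ G_o(z) = γ²·I − G(z)ᴴ G(z)`, then `‖G‖∞ < γ` and `‖F G_o⁻¹‖∞ < 1`. -/
theorem hinfNorm_stacked_lt_imp (p q k : ℕ)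
    (F : Circle → Matrix (Fin p) (Fin k) ℂ) (hF : Continuous F)
    (G : Circle → Matrix (Fin q) (Fin k) ℂ) (hG : Continuous G)
    (γ : ℝ) (hγ : 0 < γ)
    (Go : Circle → Matrix (Fin k) (Fin k) ℂ) (hGoc : Continuous Go)
    (hGo : ∀ z, IsUnit (Go z))
    (hfact : ∀ z, (Go z)ᴴ * Go z
      = ((γ : ℂ) ^ 2) • (1 : Matrix (Fin k) (Fin k) ℂ) - (G z)ᴴ * G z)
    (h : hinfNorm (fun z => Matrix.fromRows (F z) (G z)) < γ) :
    hinfNorm G < γ ∧ hinfNorm (fun z => F z * (Go z)⁻¹) < 1 := by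
  set M := fun z => Matrix.fromRows (F z) (G z) with hM
  have hMcont : Continuous M := by
    apply continuous_matrix
    rintro (i | i) j
    · exact (continuous_apply_apply i j).comp hF
    · exact (continuous_apply_apply i j).comp hG
  have hbdd : BddAbove (Set.range fun z => specNorm (M z)) :=
    (isCompact_range (specNorm_continuous'.comp hMcont)).bddAbove
  have hsle : ∀ z, specNorm (M z) ≤ hinfNorm M := fun z => le_ciSup hbdd z
  have hpt : ∀ z, specNorm (G z) ≤ specNorm (M z)
      ∧ specNorm (F z * (Go z)⁻¹) ≤ specNorm (M z) / γ := fun z =>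
    pointwise_bounds (F z) (G z) (Go z) hγ (hGo z) (hfact z) ((hsle z).trans h.le)
  constructor
  · calc hinfNorm G ≤ hinfNorm M := ciSup_le (fun z => ((hpt z).1).trans (hsle z))
    _ < γ := h
  · have h2 : hinfNorm (fun z => F z * (Go z)⁻¹) ≤ hinfNorm M / γ :=
      ciSup_le (fun z => ((hpt z).2).trans ((div_le_div_iff_of_pos_right hγ).mpr (hsle z)))
    exact lt_of_le_of_lt h2 ((div_lt_one hγ).mpr h)
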